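/- The set of all separable elements of a 0-dimensional affine K-algebra R is a K-subalgebra of R. -/

import Mathlib

open Polynomial

universe u v


section Lcm

variable {K : Type*} [Field K]

lemma sep_dvd_pair {p q : K[X]} (hp : p.Separable) (hq : q.Separable) :
    ∃ r : K[X], r.Separable ∧ p ∣ r ∧ q ∣ r := by
  classical
  set d := EuclideanDomain.gcd p q with hd
  have hdq : d ∣ q := EuclideanDomain.gcd_dvd_right p q
  have hdp : d ∣ p := EuclideanDomain.gcd_dvd_left p q
  set q₁ := q / d with hq₁def
  have hq₁ : d * q₁ = q := EuclideanDomain.mul_div_cancel' (by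
      intro h0
      rw [h0] at hdp
      exact hp.ne_zero (zero_dvd_iff.mp hdp)) hdq
  have hq₁q : q₁ ∣ q := ⟨d, by rw [← hq₁, mul_comm]⟩
  have hsq₁ : q₁.Separable := hq.of_dvd hq₁q
  have hcop : IsCoprime p q₁ := by
    rw [← EuclideanDomain.gcd_isUnit_iff]
    by_contra hne
    have hp0 : p ≠ 0 := hp.ne_zero
    have hg0 : EuclideanDomain.gcd p q₁ ≠ 0 := by
      intro h0
      exact hp0 ((EuclideanDomain.gcd_eq_zero_iff).mp h0).1
    obtain ⟨i, hi, hidvd⟩ := WfDvdMonoid.exists_irreducible_factor hne hg0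
    have hip : i ∣ p := hidvd.trans (EuclideanDomain.gcd_dvd_left _ _)
    have hiq₁ : i ∣ q₁ := hidvd.trans (EuclideanDomain.gcd_dvd_right _ _)
    have hiq : i ∣ q := hiq₁.trans hq₁q
    have hid : i ∣ d := EuclideanDomain.dvd_gcd hip hiq
    have : i * i ∣ q := by
      rw [← hq₁]; exact mul_dvd_mul hid hiq₁
    exact hi.not_isUnit (hq.squarefree i this)
  exact ⟨p * q₁, hp.mul hsq₁ hcop, dvd_mul_right _ _, by
    rw [← hq₁]; exact mul_dvd_mul hdp dvd_rfl⟩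

lemma sep_dvd_finset (s : Finset K[X]) (h : ∀ p ∈ s, p.Separable) :
    ∃ r : K[X], r.Separable ∧ ∀ p ∈ s, p ∣ r := by
  classical
  induction s using Finset.induction with
  | empty => exact ⟨1, separable_one, by simp⟩
  | @insert q t hq ih =>
    obtain ⟨r, hr, hdvd⟩ := ih (fun p hp => h p (Finset.mem_insert_of_mem hp))
    obtain ⟨r', hr', hqr', hrr'⟩ := sep_dvd_pair (h q (Finset.mem_insert_self q t)) hr
    exact ⟨r', hr', fun p hp => by
      rcases Finset.mem_insert.mp hp with rfl | hp
      · exact hqr'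
      · exact (hdvd p hp).trans hrr'⟩

end Lcm

section Unramified

lemma unramified_of_sep_gens {K A : Type*} [Field K] [CommRing A] [Algebra K A]
    (s : Set A) (hs : Algebra.adjoin K s = ⊤)
    (H : ∀ a ∈ s, ∃ p : K[X], p.Separable ∧ aeval a p = 0) :
    Algebra.FormallyUnramified K A := by
  have hD : (KaehlerDifferential.D K A) = 0 := by
    apply Derivation.ext_of_adjoin_eq_top (R := K) s hs
    intro a ha
    obtain ⟨p, hp, hpa⟩ := H a ha
    obtain ⟨u, v, huv⟩ := hp
    have h1 : aeval a v * aeval a (derivative p) = 1 := by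
      have h := congrArg (aeval a) huv
      simpa [hpa] using h
    have h2 : aeval a (derivative p) • (KaehlerDifferential.D K A) a = 0 := by
      rw [← Derivation.map_aeval, hpa, map_zero]
    show (KaehlerDifferential.D K A) a = (0 : Derivation K A _) a
    calc (KaehlerDifferential.D K A) a
        = (aeval a v * aeval a (derivative p)) • (KaehlerDifferential.D K A) a := by
          rw [h1, one_smul]
      _ = aeval a v • (aeval a (derivative p) • (KaehlerDifferential.D K A) a) := mul_smul _ _ _
      _ = 0 := by rw [h2, smul_zero]
  constructor
  have htop : (⊤ : Submodule A (Ω[A⁄K])) = ⊥ := by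
    rw [← KaehlerDifferential.span_range_derivation, Submodule.span_eq_bot]
    rintro x ⟨y, rfl⟩
    rw [hD]; rfl
  constructor
  intro x y
  have hx : x ∈ (⊥ : Submodule A (Ω[A⁄K])) := htop ▸ Submodule.mem_top
  have hy : y ∈ (⊥ : Submodule A (Ω[A⁄K])) := htop ▸ Submodule.mem_top
  rw [Submodule.mem_bot] at hx hy
  rw [hx, hy]

end Unramified




lemma minpoly_sep_of_unramified {K A : Type u} [Field K] [CommRing A] [Algebra K A]
    [FiniteDimensional K A] [Algebra.FormallyUnramified K A] (a : A) :
    (minpoly K a).Separable := by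
  classical
  haveI : IsArtinianRing A := isArtinian_of_tower K inferInstance
  haveI : Algebra.EssFiniteType K A := Algebra.EssFiniteType.of_finiteType K A
  haveI : IsReduced A := Algebra.FormallyUnramified.isReduced_of_field K A
  have hMfin : {I : Ideal A | I.IsMaximal}.Finite := IsArtinianRing.setOfPred_isMaximal_finite A
  set F : Ideal A → K[X] := fun m => minpoly K (Ideal.Quotient.mk m a) with hF
  set s : Finset K[X] := hMfin.toFinset.image F with hs
  have hsep : ∀ p ∈ s, p.Separable := by
    intro p hp
    rw [hs, Finset.mem_image] at hp
    obtain ⟨m, hm, rfl⟩ := hp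
    haveI : m.IsMaximal := (Set.Finite.mem_toFinset hMfin).mp hm
    haveI : FiniteDimensional K (A ⧸ m) :=
      Module.Finite.of_surjective (Ideal.Quotient.mkₐ K m).toLinearMap
        Ideal.Quotient.mk_surjective
    haveI : Algebra.EssFiniteType K (A ⧸ m) := Algebra.EssFiniteType.of_finiteType K (A ⧸ m)
    have hsep' : Algebra.IsSeparable K (A ⧸ m) :=
      @Algebra.FormallyUnramified.isSeparable K (A ⧸ m) _ (Ideal.Quotient.field m) _ _ _
    exact @Algebra.IsSeparable.isSeparable K (A ⧸ m) _ _ _ hsep' (Ideal.Quotient.mk m a)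
  obtain ⟨r, hr, hdvd⟩ := sep_dvd_finset s hsep
  have hra : aeval a r = 0 := by
    have hj : aeval a r ∈ Ideal.jacobson (⊥ : Ideal A) := by
      rw [Ideal.jacobson, Ideal.mem_sInf]
      rintro J ⟨-, hJ⟩
      haveI : J.IsMaximal := hJ
      have h0 : aeval (Ideal.Quotient.mk J a) r = 0 := by
        obtain ⟨c, hc⟩ := hdvd (F J)
          (by rw [hs, Finset.mem_image]; exact ⟨J, (Set.Finite.mem_toFinset hMfin).mpr this, rfl⟩)
        rw [hc, map_mul, hF]
        simp [minpoly.aeval]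
      exact Ideal.Quotient.eq_zero_iff_mem.mp
        ((Polynomial.aeval_algHom_apply (Ideal.Quotient.mkₐ K J) a r).symm.trans h0)
    obtain ⟨n, hn⟩ := IsArtinianRing.isNilpotent_jacobson_bot (R := A)
    have hnil : (aeval a r) ^ n = 0 := by
      have := Ideal.pow_mem_pow hj n
      rw [hn] at this
      simpa using this
    exact IsNilpotent.eq_zero ⟨n, hnil⟩
  exact hr.of_dvd (minpoly.dvd K a hra)





lemma core_sep {K R : Type u} [Field K] [CommRing R] [Algebra K R] [FiniteDimensional K R]
    {a b x : R} (ha : (minpoly K a).Separable) (hb : (minpoly K b).Separable)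
    (hx : x ∈ Algebra.adjoin K ({a, b} : Set R)) : (minpoly K x).Separable := by
  set S := Algebra.adjoin K ({a, b} : Set R) with hS
  haveI : FiniteDimensional K S := inferInstance
  have hinj : Function.Injective (algebraMap S R) := Subtype.val_injective
  have hmin : ∀ y : S, minpoly K (y : R) = minpoly K y := fun y =>
    minpoly.algebraMap_eq hinj y
  haveI : Algebra.FormallyUnramified K S := by
    apply unramified_of_sep_gens (K := K) ((↑) ⁻¹' ({a, b} : Set R))
    · exact Algebra.adjoin_adjoin_coe_preimage
    · rintro y hy
      rcases hy with hy | hy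
      · refine ⟨minpoly K a, ha, ?_⟩
        have h := Polynomial.aeval_subalgebra_coe (minpoly K a) S y
        apply Subtype.ext
        rw [h, show (y : R) = a from hy, minpoly.aeval]
        rfl
      · refine ⟨minpoly K b, hb, ?_⟩
        have h := Polynomial.aeval_subalgebra_coe (minpoly K b) S y
        apply Subtype.ext
        rw [h, show (y : R) = b from hy, minpoly.aeval]
        rfl
  have := minpoly_sep_of_unramified (K := K) (⟨x, hx⟩ : S)
  rwa [← hmin ⟨x, hx⟩] at this




lemma sep_add_mul {K : Type u} {R : Type v} [Field K] [CommRing R] [Algebra K R]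
    [FiniteDimensional K R] {a b : R} (ha : (minpoly K a).Separable)
    (hb : (minpoly K b).Separable) :
    (minpoly K (a + b)).Separable ∧ (minpoly K (a * b)).Separable := by
  let K' : Type max u v := ULift.{v} K
  let R' : Type max u v := ULift.{u} R
  let e₁ : K ≃+* K' := ULift.ringEquiv.symm
  let e₂ : R ≃+* R' := ULift.ringEquiv.symm
  letI algKR' : Algebra K' R' :=
    ((algebraMap K R').comp ((ULift.ringEquiv : K' ≃+* K) : K' →+* K)).toAlgebra
  have he : (algebraMap K' R').comp (e₁ : K →+* K') = (e₂ : R →+* R').comp (algebraMap K R) :=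
    RingHom.ext fun x => rfl
  have hfd := Module.Finite.of_equiv_equiv e₁ e₂ he
  have he' : (algebraMap K R).comp (e₁.symm : K' →+* K)
      = (e₂.symm : R' →+* R).comp (algebraMap K' R') :=
    RingHom.ext fun x => rfl
  have ha' : (minpoly K' (e₂ a)).Separable := IsSeparable.of_equiv_equiv e₁ e₂ he ha
  have hb' : (minpoly K' (e₂ b)).Separable := IsSeparable.of_equiv_equiv e₁ e₂ he hb
  have hmem_a : e₂ a ∈ Algebra.adjoin K' ({e₂ a, e₂ b} : Set R') :=
    Algebra.subset_adjoin (by simp)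
  have hmem_b : e₂ b ∈ Algebra.adjoin K' ({e₂ a, e₂ b} : Set R') :=
    Algebra.subset_adjoin (by simp)
  constructor
  · have hsum : (minpoly K' (e₂ a + e₂ b)).Separable :=
      @core_sep K' R' _ _ algKR' hfd _ _ _ ha' hb' (add_mem hmem_a hmem_b)
    have := IsSeparable.of_equiv_equiv e₁.symm e₂.symm he' hsum
    rwa [show e₂.symm (e₂ a + e₂ b) = a + b by
      rw [← map_add, RingEquiv.symm_apply_apply]] at this
  · have hprod : (minpoly K' (e₂ a * e₂ b)).Separable :=
      @core_sep K' R' _ _ algKR' hfd _ _ _ ha' hb' (mul_mem hmem_a hmem_b)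
    have := IsSeparable.of_equiv_equiv e₁.symm e₂.symm he' hprod
    rwa [show e₂.symm (e₂ a * e₂ b) = a * b by
      rw [← map_mul, RingEquiv.symm_apply_apply]] at this

/-- The set of all separable elements (elements whose minimal polynomial over `K` is
separable) of a 0-dimensional affine `K`-algebra `R` is a `K`-subalgebra of `R`. -/
theorem separable_elements_form_subalgebra {K R : Type*} [Field K] [CommRing R]
    [Algebra K R] [FiniteDimensional K R] :
    ∃ S : Subalgebra K R, ∀ a : R, a ∈ S ↔ (minpoly K a).Separable := by
  have halg : ∀ k : K, (minpoly K (algebraMap K R k)).Separable := by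
    intro k
    rcases subsingleton_or_nontrivial R with hR | hR
    · rw [minpoly.subsingleton]
      exact separable_one
    · rw [minpoly.eq_X_sub_C_of_algebraMap_inj k (algebraMap K R).injective]
      exact separable_X_sub_C
  refine ⟨{ carrier := {a : R | (minpoly K a).Separable},
            mul_mem' := ?_, add_mem' := ?_, algebraMap_mem' := halg,
            one_mem' := ?_, zero_mem' := ?_ }, fun a => Iff.rfl⟩
  · intro a b ha hb
    exact (sep_add_mul ha hb).2
  · have := halg 1
    rwa [map_one] at this
  · intro a b ha hb
    exact (sep_add_mul ha hb).1
  · have := halg 0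
    rwa [map_zero] at this
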